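/- Let L be a block tridiagonal positive semi-definite matrix with diagonal blocks L_1,...,L_m indexed by Y_1,...,Y_m, such that L_{Y_i, Y_j} = 0 whenever |i - j| ≥ 2. Let C ⊆ Y with C_i = C ∩ Y_i, and assume each principal submatrix L_{C_i} is invertible. Define recursively L̃_{C_1} = L_{C_1} and L̃_{C_i} = L_{C_i} − (L_{C_{i-1},C_i})^T (L̃_{C_{i-1}})^{-1} L_{C_{i-1},C_i} for i ≥ 2. Then det(L_C) = ∏_{i=1}^m det(L̃_{C_i}). -/

import Mathlib

open Matrix

/-- Principal/rectangular submatrix of `L` with rows indexed by `A` and columns by `B`. -/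
def subm {N : ℕ} (L : Matrix (Fin N) (Fin N) ℝ) (A B : Finset (Fin N)) :
    Matrix A B ℝ := Matrix.of fun i j => L i.1 j.1

namespace Stmt2Aux

variable {α : Type*} [DecidableEq α]

/-- Inclusion of coercions of nested finsets. -/
def incl {s t : Finset α} (h : s ⊆ t) : ↥s → ↥t := fun b => ⟨b.1, h b.2⟩

lemma sum_subset_subtype {M : Type*} [AddCommMonoid M] {C D : Finset α} (h : C ⊆ D)
    (f : ↥D → M) (hf : ∀ a : ↥D, a.1 ∉ C → f a = 0) :
    ∑ a, f a = ∑ b : ↥C, f (incl h b) := by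
  classical
  set F : α → M := fun x => if hx : x ∈ D then f ⟨x, hx⟩ else 0 with hF
  have h1 : ∑ a : ↥D, f a = ∑ x ∈ D, F x := by
    rw [← Finset.sum_attach D F, Finset.univ_eq_attach]
    refine Finset.sum_congr rfl fun a _ => ?_
    simp [hF]
  have h2 : ∑ b : ↥C, f (incl h b) = ∑ x ∈ C, F x := by
    rw [← Finset.sum_attach C F, Finset.univ_eq_attach]
    refine Finset.sum_congr rfl fun a _ => ?_
    simp [hF, incl, h a.2]
  rw [h1, h2]
  refine (Finset.sum_subset h fun x hxD hxC => ?_).symm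
  simp only [hF, dif_pos hxD]
  exact hf ⟨x, hxD⟩ hxC

lemma sandwich {C D K K' : Finset α} (h : C ⊆ D)
    (M : Matrix ↥D ↥D ℝ) (P : Matrix ↥D ↥K ℝ) (Q : Matrix ↥D ↥K' ℝ)
    (hP : ∀ a : ↥D, a.1 ∉ C → ∀ p, P a p = 0)
    (hQ : ∀ a : ↥D, a.1 ∉ C → ∀ p, Q a p = 0) :
    Qᵀ * M * P =
      (Q.submatrix (incl h) id)ᵀ * M.submatrix (incl h) (incl h) * (P.submatrix (incl h) id) := by
  ext p q
  simp only [Matrix.mul_apply, Matrix.transpose_apply, Matrix.submatrix_apply, id_eq]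
  rw [sum_subset_subtype h (fun b => (∑ a, Q a p * M a b) * P b q)
    (fun b hb => by simp only [hP b hb q, mul_zero])]
  refine Finset.sum_congr rfl fun b _ => ?_
  congr 1
  exact sum_subset_subtype h (fun a => Q a p * M a (incl h b))
    (fun a ha => by simp only [hQ a ha p, zero_mul])

lemma det_eq_zero_of_submatrix {C D : Finset α} (h : C ⊆ D) (M : Matrix ↥D ↥D ℝ)
    (hM : M.PosSemidef) (hdet : (M.submatrix (incl h) (incl h)).det = 0) : M.det = 0 := by
  classical
  obtain ⟨v, hv, hv0⟩ := (Matrix.exists_mulVec_eq_zero_iff).mpr hdet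
  set w : ↥D → ℝ := fun a => if ha : a.1 ∈ C then v ⟨a.1, ha⟩ else 0 with hw
  have hw0 : ∀ a : ↥D, a.1 ∉ C → w a = 0 := fun a ha => dif_neg ha
  have hwinc : ∀ b : ↥C, w (incl h b) = v b := fun b => dif_pos b.2
  have hMw : ∀ b : ↥C, (M *ᵥ w) (incl h b) = 0 := by
    intro b
    have : (M *ᵥ w) (incl h b) = (M.submatrix (incl h) (incl h) *ᵥ v) b := by
      simp only [Matrix.mulVec, dotProduct, Matrix.submatrix_apply]
      rw [sum_subset_subtype h (fun a => M (incl h b) a * w a)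
        (fun a ha => by simp only [hw0 a ha, mul_zero])]
      exact Finset.sum_congr rfl fun a _ => by rw [hwinc]
    rw [this, hv0]
    rfl
  have key : star w ⬝ᵥ M *ᵥ w = 0 := by
    simp only [dotProduct]
    rw [sum_subset_subtype h (fun a => star w a * (M *ᵥ w) a)
      (fun a ha => by simp [Pi.star_apply, hw0 a ha])]
    refine Finset.sum_eq_zero fun b _ => ?_
    rw [Pi.star_apply, hMw b, mul_zero]
  have hMw0 : M *ᵥ w = 0 := (hM.dotProduct_mulVec_zero_iff w).mp key
  have hwne : w ≠ 0 := by
    obtain ⟨i, hi⟩ := Function.ne_iff.mp hv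
    intro hcon
    apply hi
    have := congrFun hcon (incl h i)
    rwa [hwinc i, Pi.zero_apply] at this
  exact Matrix.exists_mulVec_eq_zero_iff.mp ⟨w, hwne, hMw0⟩

def unionEquiv {s t : Finset α} (hd : Disjoint s t) : ↥s ⊕ ↥t ≃ ↥(s ∪ t) where
  toFun := Sum.elim (fun a => ⟨a.1, Finset.mem_union_left _ a.2⟩)
    (fun a => ⟨a.1, Finset.mem_union_right _ a.2⟩)
  invFun a := if h : a.1 ∈ s then Sum.inl ⟨a.1, h⟩
    else Sum.inr ⟨a.1, (Finset.mem_union.1 a.2).resolve_left h⟩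
  left_inv x := by
    cases x with
    | inl a => simp [a.2]
    | inr a => simp [Finset.disjoint_right.1 hd a.2]
  right_inv a := by
    by_cases h : a.1 ∈ s <;> simp [h]

end Stmt2Aux

open Stmt2Aux

/-- For a block tridiagonal PSD matrix `L` with blocks `Y 0, …, Y (m-1)`
(`L_{Y_i,Y_j} = 0` for `|i-j| ≥ 2`), a subset `C` with parts `Ci i ⊆ Y i`, each `L_{C_i}`
invertible, and `L̃` defined by the Schur-complement recursion,
`det(L_C) = ∏ᵢ det(L̃_{C_i})`. -/
theorem stmt2 {N m : ℕ} (L : Matrix (Fin N) (Fin N) ℝ) (hL : L.PosSemidef)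
    (Y : ℕ → Finset (Fin N))
    (hdisj : ∀ i < m, ∀ j < m, i ≠ j → Disjoint (Y i) (Y j))
    (hcover : (Finset.range m).biUnion Y = Finset.univ)
    (htri : ∀ i < m, ∀ j < m, i + 2 ≤ j →
      ∀ a ∈ Y i, ∀ b ∈ Y j, L a b = 0 ∧ L b a = 0)
    (Ci : ℕ → Finset (Fin N)) (hCi : ∀ i < m, Ci i ⊆ Y i)
    (hinv : ∀ i < m, IsUnit (subm L (Ci i) (Ci i)).det)
    (Lt : (i : ℕ) → Matrix (Ci i) (Ci i) ℝ)
    (hLt0 : Lt 0 = subm L (Ci 0) (Ci 0))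
    (hLtS : ∀ i, 0 < i → i < m →
      Lt i = subm L (Ci i) (Ci i)
        - (subm L (Ci (i - 1)) (Ci i))ᵀ * (Lt (i - 1))⁻¹ * subm L (Ci (i - 1)) (Ci i)) :
    (subm L ((Finset.range m).biUnion Ci) ((Finset.range m).biUnion Ci)).det
      = ∏ i ∈ Finset.range m, (Lt i).det := by
  classical
  have hDsub : ∀ {i k : ℕ}, i < k → Ci i ⊆ (Finset.range k).biUnion Ci := fun {i k} hik =>
    Finset.subset_biUnion_of_mem Ci (Finset.mem_range.2 hik)
  have hDmono : ∀ {k l : ℕ}, k ≤ l →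
      (Finset.range k).biUnion Ci ⊆ (Finset.range l).biUnion Ci := fun {k l} h =>
    Finset.biUnion_subset_biUnion_of_subset_left _ (Finset.range_subset_range.2 h)
  have hsymm : ∀ a b, L a b = L b a := fun a b => by
    have h1 := congrFun (congrFun hL.1 a) b
    simpa [Matrix.conjTranspose_apply] using h1.symm
  have hdisjDC : ∀ k < m, Disjoint ((Finset.range k).biUnion Ci) (Ci k) := by
    intro k hk
    rw [Finset.disjoint_left]
    intro a haD haC
    obtain ⟨i, hi, hai⟩ := Finset.mem_biUnion.1 haD
    rw [Finset.mem_range] at hi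
    exact Finset.disjoint_left.1 (hdisj i (lt_trans hi hk) k hk (Nat.ne_of_lt hi))
      (hCi i (lt_trans hi hk) hai) (hCi k hk haC)
  have hDsucc : ∀ k, (Finset.range (k+1)).biUnion Ci = (Finset.range k).biUnion Ci ∪ Ci k := by
    intro k
    rw [Finset.range_add_one, Finset.biUnion_insert, Finset.union_comm]
  have hBsupp : ∀ k, 0 < k → k < m → ∀ a : ↥((Finset.range k).biUnion Ci), a.1 ∉ Ci (k-1) →
      ∀ b : ↥(Ci k), L a.1 b.1 = 0 := by
    intro k hk0 hkm a ha b
    obtain ⟨i, hi, hai⟩ := Finset.mem_biUnion.1 a.2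
    rw [Finset.mem_range] at hi
    have hik : i ≠ k - 1 := fun h => ha (h ▸ hai)
    have h2 : i + 2 ≤ k := by omega
    exact (htri i (by omega) k hkm h2 a.1 (hCi i (by omega) hai) b.1 (hCi k hkm b.2)).1
  -- The main step
  have step : ∀ k, k < m →
      IsUnit (subm L ((Finset.range k).biUnion Ci) ((Finset.range k).biUnion Ci)).det →
      (0 < k → ∀ h : Ci (k-1) ⊆ (Finset.range k).biUnion Ci,
        ((subm L ((Finset.range k).biUnion Ci) ((Finset.range k).biUnion Ci))⁻¹).submatrix
          (incl h) (incl h) = (Lt (k-1))⁻¹) →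
      ((subm L ((Finset.range (k+1)).biUnion Ci) ((Finset.range (k+1)).biUnion Ci)).det
        = (subm L ((Finset.range k).biUnion Ci) ((Finset.range k).biUnion Ci)).det * (Lt k).det ∧
      (IsUnit (Lt k).det → ∀ h' : Ci k ⊆ (Finset.range (k+1)).biUnion Ci,
        ((subm L ((Finset.range (k+1)).biUnion Ci) ((Finset.range (k+1)).biUnion Ci))⁻¹).submatrix
          (incl h') (incl h') = (Lt k)⁻¹)) := by
    intro k hkm hAdet hcorner
    rw [hDsucc k]
    have hd := hdisjDC k hkm
    set Dk := (Finset.range k).biUnion Ci with hDk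
    set e := unionEquiv hd with he
    set A := subm L Dk Dk with hA
    set B := subm L Dk (Ci k) with hB
    set Bt := subm L (Ci k) Dk with hBt
    set Dm := subm L (Ci k) (Ci k) with hDm
    have hblock : (subm L (Dk ∪ Ci k) (Dk ∪ Ci k)).submatrix e e = fromBlocks A B Bt Dm := by
      ext i j
      cases i <;> cases j <;> rfl
    haveI iA : Invertible A := A.invertibleOfIsUnitDet hAdet
    have hS : Dm - Bt * ⅟A * B = Lt k := by
      rcases Nat.eq_zero_or_pos k with hk0 | hk0
      · subst hk0
        haveI : IsEmpty ↥Dk := Finset.isEmpty_coe_sort.2 (by simp [hDk])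
        have hz : Bt * ⅟A * B = 0 := by
          ext p q
          simp [Matrix.mul_apply, Finset.univ_eq_empty]
        rw [hz, sub_zero, hDm, hLt0]
      · have hsub : Ci (k-1) ⊆ Dk := hDsub (by omega)
        have hBts : Bt = Bᵀ := by
          ext p a
          exact hsymm p.1 a.1
        have hPsupp : ∀ a : ↥Dk, a.1 ∉ Ci (k-1) → ∀ p : ↥(Ci k), B a p = 0 :=
          fun a ha p => hBsupp k hk0 hkm a ha p
        have hsand := sandwich hsub A⁻¹ B B hPsupp hPsupp
        have hBsub : B.submatrix (incl hsub) id = subm L (Ci (k-1)) (Ci k) := by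
          ext i j; rfl
        rw [hBts, invOf_eq_nonsing_inv, hsand, hBsub, hcorner hk0 hsub]
        exact (hLtS k hk0 hkm).symm
    have hdet1 : (subm L (Dk ∪ Ci k) (Dk ∪ Ci k)).det = A.det * (Lt k).det := by
      rw [← Matrix.det_submatrix_equiv_self e, hblock, Matrix.det_fromBlocks₁₁, hS]
    refine ⟨hdet1, ?_⟩
    intro hu h'
    haveI iS : Invertible (Dm - Bt * ⅟A * B) :=
      (Dm - Bt * ⅟A * B).invertibleOfIsUnitDet (by rw [hS]; exact hu)
    haveI iFB : Invertible (fromBlocks A B Bt Dm) := fromBlocks₁₁Invertible A B Bt Dm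
    have hinveq : ((subm L (Dk ∪ Ci k) (Dk ∪ Ci k))⁻¹).submatrix e e
        = (fromBlocks A B Bt Dm)⁻¹ := by
      rw [← hblock]
      exact (Matrix.inv_submatrix_equiv _ e e).symm
    have hcorner' : ((subm L (Dk ∪ Ci k) (Dk ∪ Ci k))⁻¹).submatrix (incl h') (incl h')
        = ((fromBlocks A B Bt Dm)⁻¹).submatrix Sum.inr Sum.inr := by
      ext i j
      rw [← hinveq]
      rfl
    rw [hcorner', ← invOf_eq_nonsing_inv, Matrix.invOf_fromBlocks₁₁_eq]
    have hfin : (⅟(Dm - Bt * ⅟A * B) : Matrix _ _ ℝ) = (Lt k)⁻¹ := by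
      rw [invOf_eq_nonsing_inv, hS]
    ext i j
    simp [Matrix.fromBlocks, hfin]
  -- main induction
  have main : ∀ k, k ≤ m → (∀ i < k, IsUnit (Lt i).det) →
      (subm L ((Finset.range k).biUnion Ci) ((Finset.range k).biUnion Ci)).det
        = ∏ i ∈ Finset.range k, (Lt i).det ∧
      (0 < k → ∀ h : Ci (k-1) ⊆ (Finset.range k).biUnion Ci,
        ((subm L ((Finset.range k).biUnion Ci) ((Finset.range k).biUnion Ci))⁻¹).submatrix
          (incl h) (incl h) = (Lt (k-1))⁻¹) := by
    intro k
    induction k with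
    | zero =>
      intro _ _
      constructor
      · haveI : IsEmpty ↥((Finset.range 0).biUnion Ci) := Finset.isEmpty_coe_sort.2 (by simp)
        rw [Matrix.det_isEmpty]; simp
      · intro h
        exact absurd h (lt_irrefl 0)
    | succ k ih =>
      intro hk1 hu
      have hkm : k < m := hk1
      obtain ⟨ihdet, ihcor⟩ := ih (le_of_lt hkm) (fun i hi => hu i (Nat.lt_succ_of_lt hi))
      have hunit : IsUnit
          (subm L ((Finset.range k).biUnion Ci) ((Finset.range k).biUnion Ci)).det := by
        rw [ihdet]
        exact isUnit_iff_ne_zero.2 (Finset.prod_ne_zero_iff.2 fun i hi =>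
          isUnit_iff_ne_zero.1 (hu i (Nat.lt_succ_of_lt (Finset.mem_range.1 hi))))
      obtain ⟨sdet, scor⟩ := step k hkm hunit ihcor
      constructor
      · rw [sdet, ihdet, Finset.prod_range_succ]
      · intro _ h
        exact scor (hu k (Nat.lt_succ_self k)) h
  by_cases hall : ∀ i < m, IsUnit (Lt i).det
  · exact (main m le_rfl hall).1
  · push_neg at hall
    have hex : ∃ j, j < m ∧ ¬IsUnit (Lt j).det := hall
    obtain ⟨hjm, hjnu⟩ := Nat.find_spec hex
    set j := Nat.find hex with hj
    have hmin : ∀ i < j, IsUnit (Lt i).det := by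
      intro i hi
      by_contra hcon
      exact Nat.find_min hex hi ⟨lt_trans hi hjm, hcon⟩
    obtain ⟨jdet, jcor⟩ := main j (le_of_lt hjm) hmin
    have hjdetu : IsUnit
        (subm L ((Finset.range j).biUnion Ci) ((Finset.range j).biUnion Ci)).det := by
      rw [jdet]
      exact isUnit_iff_ne_zero.2 (Finset.prod_ne_zero_iff.2 fun i hi =>
        isUnit_iff_ne_zero.1 (hmin i (Finset.mem_range.1 hi)))
    obtain ⟨sdet, -⟩ := step j hjm hjdetu jcor
    have hLtj : (Lt j).det = 0 := by rwa [isUnit_iff_ne_zero, not_not] at hjnu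
    have hz : (subm L ((Finset.range (j+1)).biUnion Ci)
        ((Finset.range (j+1)).biUnion Ci)).det = 0 := by
      rw [sdet, hLtj, mul_zero]
    have hsub : (Finset.range (j+1)).biUnion Ci ⊆ (Finset.range m).biUnion Ci :=
      hDmono (Nat.succ_le_of_lt hjm)
    have hpsd : (subm L ((Finset.range m).biUnion Ci)
        ((Finset.range m).biUnion Ci)).PosSemidef :=
      hL.submatrix _
    have hzero := det_eq_zero_of_submatrix hsub _ hpsd (by
      have heq : (subm L ((Finset.range m).biUnion Ci) ((Finset.range m).biUnion Ci)).submatrix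
          (incl hsub) (incl hsub)
          = subm L ((Finset.range (j+1)).biUnion Ci) ((Finset.range (j+1)).biUnion Ci) := by
        ext a b
        rfl
      rw [heq]
      exact hz)
    rw [hzero, Finset.prod_eq_zero (Finset.mem_range.2 hjm) hLtj]
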